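/- arXiv:1502.07730 — 2 statements merged into one kernel-verified Lean document; each statement's English description precedes it below -/
import Mathlib

section
/- Let m ≥ 3 and let n be an integer with (3^{m−1} + 1)/2 ≤ n ≤ (3^{m−1} + 1)/2 + 3^{m−2}. Then the number of feasible partitions of n satisfies the recursion t(n) = Σ_{R = ⌈(n−1)/3⌉}^{⌊(2n + 3^{m−2} − 1)/4⌋} t(R) − Σ_{R = ⌈(3n+2)/5⌉}^{⌊(2n + 3^{m−2} − 1)/4⌋} Σ_{S = ⌈(R−1)/3⌉}^{2R − n − 1} t(S), where empty sums are 0. -/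
/-- `w : Fin m → ℕ` (1-indexed as `w_1 ≤ … ≤ w_m` in the paper) is a weighing
sequence for `n`: a nondecreasing list of `m` positive integers summing to `n`
such that every integer `1 ≤ k ≤ n` can be written as
`k = u_1 w_1 + … + u_m w_m` with each `u_i ∈ {-1, 0, 1}`. -/
def IsWeighingSeq (n m : ℕ) (w : Fin m → ℕ) : Prop :=
  (∀ i, 0 < w i) ∧ Monotone w ∧ (∑ i, w i) = n ∧
  ∀ k : ℤ, 1 ≤ k → k ≤ (n : ℤ) →
    ∃ u : Fin m → ℤ, (∀ i, u i = -1 ∨ u i = 0 ∨ u i = 1) ∧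
      k = ∑ i, u i * (w i : ℤ)

/-- A feasible partition of `n`: a weighing sequence for `n` of minimal length. -/
def IsFeasible (n m : ℕ) (w : Fin m → ℕ) : Prop :=
  IsWeighingSeq n m w ∧
    ∀ (m' : ℕ) (w' : Fin m' → ℕ), IsWeighingSeq n m' w' → m ≤ m'

/-- `t n` is the number of feasible partitions of `n` (note `t 0 = 1`, the empty
partition being the unique feasible partition of `0`). -/
noncomputable def t (n : ℕ) : ℕ :=
  Nat.card {p : (m : ℕ) × (Fin m → ℕ) // IsFeasible n p.1 p.2}

open Finset
namespace TRec

def ps {m : ℕ} (w : Fin m → ℕ) (j : ℕ) : ℕ := ∑ i : Fin m, if i.val < j then w i else 0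

def Nice (n m : ℕ) (w : Fin m → ℕ) : Prop :=
  (∀ i, 0 < w i) ∧ Monotone w ∧ (∑ i, w i) = n ∧ ∀ j : Fin m, w j ≤ 2 * ps w (j : ℕ) + 1

lemma ps_snoc {p : ℕ} (v : Fin p → ℕ) (x : ℕ) (j : ℕ) :
    ps (Fin.snoc v x) j = ps v j + if p < j then x else 0 := by
  unfold ps
  rw [Fin.sum_univ_castSucc]
  simp [Fin.snoc_castSucc, Fin.snoc_last]

lemma ps_total {m : ℕ} (w : Fin m → ℕ) : ps w m = ∑ i, w i := by
  unfold ps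
  apply Finset.sum_congr rfl
  intro i _
  simp [i.isLt]

lemma monotone_snoc {p : ℕ} {v : Fin p → ℕ} {x : ℕ} (hv : Monotone v) (hx : ∀ i, v i ≤ x) :
    Monotone (Fin.snoc v x) := by
  intro a b hab
  rcases Fin.eq_castSucc_or_eq_last a with ⟨a', rfl⟩ | rfl
  · rcases Fin.eq_castSucc_or_eq_last b with ⟨b', rfl⟩ | rfl
    · simp only [Fin.snoc_castSucc]
      exact hv (by exact_mod_cast hab)
    · simp only [Fin.snoc_castSucc, Fin.snoc_last]
      exact hx a'
  · rcases Fin.eq_castSucc_or_eq_last b with ⟨b', rfl⟩ | rfl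
    · exact absurd hab (not_le.2 (Fin.castSucc_lt_last b'))
    · exact le_refl _

lemma nice_snoc_iff {p n : ℕ} (v : Fin p → ℕ) (x : ℕ) :
    Nice n (p + 1) (Fin.snoc v x) ↔
      Nice (∑ i, v i) p v ∧ 0 < x ∧ (∀ i, v i ≤ x) ∧ x ≤ 2 * (∑ i, v i) + 1 ∧
        (∑ i, v i) + x = n := by
  constructor
  · rintro ⟨hpos, hmono, hsum, hnice⟩
    have hvx : ∀ i, v i ≤ x := by
      intro i
      have := hmono (Fin.castSucc_lt_last i).le
      simpa using this
    refine ⟨⟨?_, ?_, rfl, ?_⟩, ?_, hvx, ?_, ?_⟩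
    · intro i; simpa using hpos i.castSucc
    · intro a b hab
      have := hmono (show (a : Fin p).castSucc ≤ b.castSucc by exact_mod_cast hab)
      simpa using this
    · intro j
      have := hnice j.castSucc
      rw [ps_snoc] at this
      simpa [show ¬ (p < (j:ℕ)) from Nat.not_lt.2 j.isLt.le] using this
    · simpa using hpos (Fin.last p)
    · have := hnice (Fin.last p)
      rw [ps_snoc] at this
      simpa [ps_total] using this
    · rw [← hsum, Fin.sum_univ_castSucc]; simp
  · rintro ⟨⟨hpos, hmono, -, hnice⟩, hx, hvx, hxle, hsum⟩
    refine ⟨?_, monotone_snoc hmono hvx, ?_, ?_⟩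
    · intro i
      rcases Fin.eq_castSucc_or_eq_last i with ⟨i', rfl⟩ | rfl
      · simpa using hpos i'
      · simpa using hx
    · rw [Fin.sum_univ_castSucc]; simpa using hsum
    · intro j
      rcases Fin.eq_castSucc_or_eq_last j with ⟨j', rfl⟩ | rfl
      · rw [ps_snoc]
        have := hnice j'
        simpa [show ¬ (p < (j' : ℕ)) from Nat.not_lt.2 j'.isLt.le] using this
      · rw [ps_snoc]
        simpa [ps_total] using hxle

lemma nice_zero {n : ℕ} (w : Fin 0 → ℕ) : Nice n 0 w ↔ n = 0 := by
  constructor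
  · rintro ⟨-, -, hsum, -⟩; simpa using hsum.symm
  · rintro rfl
    exact ⟨fun i => i.elim0, fun a => a.elim0, by simp, fun j => j.elim0⟩

lemma nice_sum_le {p : ℕ} : ∀ {n : ℕ} {w : Fin p → ℕ}, Nice n p w → 2 * n + 1 ≤ 3 ^ p := by
  induction p with
  | zero => intro n w h; rw [nice_zero w] at h; simp [h]
  | succ p ih =>
    intro n w h
    rw [← Fin.snoc_init_self w, nice_snoc_iff] at h
    obtain ⟨hv, hx, -, hxle, hsum⟩ := h
    have := ih hv
    have h3 : (3:ℕ) ^ (p+1) = 3 * 3 ^ p := by ring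
    omega

lemma nice_part_le {p n : ℕ} {w : Fin p → ℕ} (h : Nice n p w) (i : Fin p) :
    3 * w i ≤ 2 * n + 1 := by
  cases p with
  | zero => exact i.elim0
  | succ p =>
    have h' := h
    rw [← Fin.snoc_init_self w, nice_snoc_iff] at h'
    obtain ⟨hv, hx, hvx, hxle, hsum⟩ := h'
    have hle : w i ≤ w (Fin.last p) := h.2.1 (Fin.le_last i)
    omega

/-- Sufficiency core: every `k` with `|k| ≤ n` is representable. -/
lemma nice_rep {p : ℕ} :
    ∀ {n : ℕ} {w : Fin p → ℕ}, Nice n p w → ∀ k : ℤ, -(n : ℤ) ≤ k → k ≤ (n : ℤ) →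
      ∃ u : Fin p → ℤ, (∀ i, u i = -1 ∨ u i = 0 ∨ u i = 1) ∧ k = ∑ i, u i * (w i : ℤ) := by
  induction p with
  | zero =>
    intro n w h k hk1 hk2
    have hn : n = 0 := by have := h.2.2.1; simpa using this.symm
    subst hn
    refine ⟨fun i => 0, fun i => i.elim0, ?_⟩
    simp only [Finset.univ_eq_empty, Finset.sum_empty]
    simp at hk1 hk2
    omega
  | succ p ih =>
    intro n w h k hk1 hk2
    have h' := h
    rw [← Fin.snoc_init_self w, nice_snoc_iff] at h'
    obtain ⟨hnv, hx, hvx, hxle, hsum⟩ := h'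
    set v := Fin.init w with hv
    set x := w (Fin.last p) with hxdef
    set V := ∑ i, v i with hV
    have key : ∀ (c k' : ℤ), (c = -1 ∨ c = 0 ∨ c = 1) → -(V:ℤ) ≤ k' → k' ≤ (V:ℤ) →
        k = k' + c * x →
        ∃ u : Fin (p+1) → ℤ, (∀ i, u i = -1 ∨ u i = 0 ∨ u i = 1) ∧
          k = ∑ i, u i * (w i : ℤ) := by
      intro c k' hc hb1 hb2 hk
      obtain ⟨u', hu', hrep⟩ := ih hnv k' hb1 hb2
      refine ⟨Fin.snoc u' c, ?_, ?_⟩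
      · intro i
        rcases Fin.eq_castSucc_or_eq_last i with ⟨i', rfl⟩ | rfl
        · simpa using hu' i'
        · simpa using hc
      · rw [Fin.sum_univ_castSucc]
        simp only [Fin.snoc_castSucc, Fin.snoc_last]
        have : ∀ i' : Fin p, w i'.castSucc = v i' := by
          intro i'; rw [hv]; rfl
        calc k = k' + c * x := hk
          _ = ∑ i, u' i * (v i : ℤ) + c * (w (Fin.last p) : ℤ) := by rw [← hrep, ← hxdef]
          _ = _ := by
              rw [Finset.sum_congr rfl (fun i' _ => by rw [this i'] :
                ∀ i' ∈ Finset.univ, u' i' * (v i' : ℤ) = u' i' * (w i'.castSucc : ℤ))]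
    by_cases hgt : (V : ℤ) < k
    · exact key 1 (k - x) (by tauto) (by omega) (by omega) (by ring)
    · by_cases hlt : k < -(V : ℤ)
      · exact key (-1) (k + x) (by tauto) (by omega) (by omega) (by ring)
      · exact key 0 k (by tauto) (by omega) (by omega) (by ring)

/-- Necessity: a weighing sequence satisfies the nice condition. -/
lemma weighing_nice_cond {n m : ℕ} {w : Fin m → ℕ} (h : IsWeighingSeq n m w) (j : Fin m) :
    w j ≤ 2 * ps w (j : ℕ) + 1 := by
  obtain ⟨hpos, hmono, hsum, hrep⟩ := h
  by_contra hcon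
  push_neg at hcon
  set S : ℕ := ps w (j : ℕ) with hS
  -- prefix/tail split
  have hps : S = ∑ i ∈ Finset.univ.filter (fun i : Fin m => i < j), w i := by
    rw [hS]
    unfold ps
    rw [Finset.sum_filter]
    apply Finset.sum_congr rfl
    intro i _
    by_cases hij : i < j
    · rw [if_pos (Fin.lt_def.mp hij), if_pos hij]
    · rw [if_neg (fun hc => hij (Fin.lt_def.mpr hc)), if_neg hij]
  set T : ℕ := ∑ i ∈ Finset.univ.filter (fun i : Fin m => ¬ i < j), w i with hT
  have hST : S + T = n := by
    rw [hps, hT, Finset.sum_filter_add_sum_filter_not, hsum]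
  have hjT : w j ≤ T := by
    apply Finset.single_le_sum (fun i _ => Nat.zero_le _)
    simp
  have hk1 : (1 : ℤ) ≤ (n : ℤ) - 2 * S - 1 := by
    have : 3 * S + 2 ≤ n := by omega
    push_cast
    omega
  obtain ⟨u, hu, hrepk⟩ := hrep ((n : ℤ) - 2 * S - 1) hk1 (by push_cast; omega)
  -- split the representation
  have hsplit : ∑ i, u i * (w i : ℤ) =
      (∑ i ∈ Finset.univ.filter (fun i : Fin m => i < j), u i * (w i : ℤ)) +
      (∑ i ∈ Finset.univ.filter (fun i : Fin m => ¬ i < j), u i * (w i : ℤ)) :=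
    (Finset.sum_filter_add_sum_filter_not _ _ _).symm
  set r : ℤ := ∑ i ∈ Finset.univ.filter (fun i : Fin m => i < j), u i * (w i : ℤ) with hr
  set t : ℤ := ∑ i ∈ Finset.univ.filter (fun i : Fin m => ¬ i < j), u i * (w i : ℤ) with ht
  have hbound : ∀ i : Fin m, u i * (w i : ℤ) ≤ (w i : ℤ) ∧ -(w i : ℤ) ≤ u i * (w i : ℤ) := by
    intro i
    have hw : (0:ℤ) ≤ (w i : ℤ) := Int.natCast_nonneg _
    rcases hu i with h' | h' | h' <;> rw [h'] <;> constructor <;> nlinarith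
  have hrle : r ≤ (S : ℤ) := by
    rw [hr, hps]
    push_cast
    exact Finset.sum_le_sum (fun i _ => (hbound i).1)
  have hrge : -(S : ℤ) ≤ r := by
    rw [hr, hps]
    push_cast
    rw [← Finset.sum_neg_distrib]
    exact Finset.sum_le_sum (fun i _ => (hbound i).2)
  have hcsum : ∑ i ∈ Finset.univ.filter (fun i : Fin m => ¬ i < j), (1 - u i) * (w i : ℤ)
      = (S : ℤ) + 1 + r := by
    have expand : ∑ i ∈ Finset.univ.filter (fun i : Fin m => ¬ i < j), (1 - u i) * (w i : ℤ)
        = (T : ℤ) - t := by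
      rw [ht, hT]
      push_cast
      rw [← Finset.sum_sub_distrib]
      apply Finset.sum_congr rfl
      intro i _
      ring
    rw [expand]
    have hkrt : (n : ℤ) - 2 * S - 1 = r + t := by rw [hrepk, hsplit]
    have hn : (n : ℤ) = (S : ℤ) + (T : ℤ) := by exact_mod_cast hST.symm
    linarith
  have hterm_nonneg : ∀ i ∈ Finset.univ.filter (fun i : Fin m => ¬ i < j),
      (0:ℤ) ≤ (1 - u i) * (w i : ℤ) := by
    intro i _
    apply mul_nonneg _ (Int.natCast_nonneg _)
    rcases hu i with h' | h' | h' <;> rw [h'] <;> norm_num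
  have hexist : ∃ i ∈ Finset.univ.filter (fun i : Fin m => ¬ i < j),
      (0:ℤ) < (1 - u i) * (w i : ℤ) := by
    have hpossum : (0:ℤ) < ∑ i ∈ Finset.univ.filter (fun i : Fin m => ¬ i < j),
        (1 - u i) * (w i : ℤ) := by
      rw [hcsum]; linarith
    have := Finset.exists_lt_of_sum_lt (f := fun _ : Fin m => (0:ℤ))
      (by simpa using hpossum)
    simpa using this
  obtain ⟨i, hi, hipos⟩ := hexist
  have hji : j ≤ i := by
    simp only [Finset.mem_filter, Finset.mem_univ, true_and] at hi
    exact not_lt.1 hi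
  have hwji : (w j : ℤ) ≤ (w i : ℤ) := by exact_mod_cast hmono hji
  have h1u : (1:ℤ) ≤ 1 - u i := by
    rcases hu i with h' | h' | h'
    · rw [h']; norm_num
    · rw [h']; norm_num
    · rw [h'] at hipos; simp at hipos
  have hterm_ge : (w i : ℤ) ≤ (1 - u i) * (w i : ℤ) :=
    le_mul_of_one_le_left (Int.natCast_nonneg _) h1u
  have hle_sum : (1 - u i) * (w i : ℤ) ≤
      ∑ i' ∈ Finset.univ.filter (fun i' : Fin m => ¬ i' < j), (1 - u i') * (w i' : ℤ) :=
    Finset.single_le_sum hterm_nonneg hi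
  rw [hcsum] at hle_sum
  have hwj : (2 * S + 2 : ℤ) ≤ (w j : ℤ) := by exact_mod_cast hcon
  linarith

lemma weighing_iff_nice {n m : ℕ} {w : Fin m → ℕ} : IsWeighingSeq n m w ↔ Nice n m w := by
  constructor
  · intro h
    exact ⟨h.1, h.2.1, h.2.2.1, fun j => weighing_nice_cond h j⟩
  · intro h
    refine ⟨h.1, h.2.1, h.2.2.1, fun k hk1 hk2 => nice_rep h k ?_ hk2⟩
    have : (0:ℤ) ≤ (n:ℤ) := Int.natCast_nonneg _
    linarith

lemma odd_pow3 (q : ℕ) : 3 ^ q % 2 = 1 := by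
  induction q with
  | zero => rfl
  | succ q ih => rw [pow_succ]; omega

lemma pow3_pos (q : ℕ) : 1 ≤ 3 ^ q := Nat.one_le_pow _ _ (by norm_num)

lemma nice_exists : ∀ q n : ℕ, 3 ^ q < 2 * n + 1 → 2 * n + 1 ≤ 3 ^ (q + 1) →
    ∃ w : Fin (q + 1) → ℕ, Nice n (q + 1) w := by
  intro q
  induction q with
  | zero =>
    intro n h1 h2
    have hn : n = 1 := by simp at h1 h2; omega
    subst hn
    refine ⟨fun _ => 1, fun i => one_pos, fun a b _ => le_refl _, by simp, fun j => ?_⟩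
    simp
  | succ q ih =>
    intro n h1 h2
    have hKodd : 3 ^ q % 2 = 1 := odd_pow3 q
    have hKpos : 1 ≤ 3 ^ q := pow3_pos q
    have h1' : 3 * 3 ^ q < 2 * n + 1 := by
      have : (3:ℕ) ^ (q + 1) = 3 * 3 ^ q := by ring
      omega
    have h2' : 2 * n + 1 ≤ 9 * 3 ^ q := by
      have : (3:ℕ) ^ (q + 2) = 9 * 3 ^ q := by ring
      omega
    set R := max ((3 ^ q + 1) / 2) ((n + 1) / 3) with hR
    have hRa : (3 ^ q + 1) / 2 ≤ R := le_max_left _ _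
    have hRb : (n + 1) / 3 ≤ R := le_max_right _ _
    have hRc : R = (3 ^ q + 1) / 2 ∨ R = (n + 1) / 3 := max_choice _ _
    have hg1 : 3 ^ q < 2 * R + 1 := by rcases hRc with hc | hc <;> omega
    have hg2 : 2 * R + 1 ≤ 3 ^ (q + 1) := by
      have h3 : (3:ℕ) ^ (q + 1) = 3 * 3 ^ q := by ring
      rcases hRc with hc | hc <;> omega
    have hx : 0 < n - R := by rcases hRc with hc | hc <;> omega
    have hbig : 2 * R + 1 ≤ 3 * (n - R) := by rcases hRc with hc | hc <;> omega
    have hsmall : n - R ≤ 2 * R + 1 := by rcases hRc with hc | hc <;> omega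
    have hsum : R + (n - R) = n := by rcases hRc with hc | hc <;> omega
    obtain ⟨v, hv⟩ := ih R hg1 hg2
    have hvsum : ∑ i, v i = R := hv.2.2.1
    refine ⟨Fin.snoc v (n - R), ?_⟩
    rw [nice_snoc_iff, hvsum]
    refine ⟨hv, hx, ?_, hsmall, hsum⟩
    intro i
    have := nice_part_le hv i
    omega

/-- key uniqueness: any two "nice of minimal length" have the same length -/
lemma nice_len_eq {n m m' : ℕ} (h1 : 2 * n + 1 ≤ 3 ^ m) (h1' : 3 ^ (m - 1) < 2 * n + 1)
    (h2 : 2 * n + 1 ≤ 3 ^ m') (h2' : 3 ^ (m' - 1) < 2 * n + 1) : m = m' := by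
  by_contra hne
  rcases Nat.lt_or_ge m m' with hlt | hge
  · have : (3:ℕ) ^ m ≤ 3 ^ (m' - 1) := Nat.pow_le_pow_right (by norm_num) (by omega)
    omega
  · have hlt : m' < m := by omega
    have : (3:ℕ) ^ m' ≤ 3 ^ (m - 1) := Nat.pow_le_pow_right (by norm_num) (by omega)
    omega

lemma feasible_iff {n m : ℕ} {w : Fin m → ℕ} (hn : 1 ≤ n) :
    IsFeasible n m w ↔ Nice n m w ∧ 3 ^ (m - 1) < 2 * n + 1 := by
  constructor
  · rintro ⟨hw, hmin⟩
    refine ⟨weighing_iff_nice.mp hw, ?_⟩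
    by_contra hcon
    push_neg at hcon
    set q := Nat.log 3 (2 * n) with hq
    have hq1 : 3 ^ q ≤ 2 * n := Nat.pow_log_le_self 3 (by omega)
    have hq2 : 2 * n < 3 ^ (q + 1) := Nat.lt_pow_succ_log_self (by norm_num) _
    obtain ⟨w', hw'⟩ := nice_exists q n (by omega) (by omega)
    have := hmin (q + 1) w' (weighing_iff_nice.mpr hw')
    -- m ≤ q + 1 but 3^q < 2n+1 ≤ 3^(m-1) so q < m - 1
    have hqm : q < m - 1 := by
      by_contra hge
      have : (3:ℕ) ^ (m - 1) ≤ 3 ^ q := Nat.pow_le_pow_right (by norm_num) (by omega)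
      omega
    omega
  · rintro ⟨hni, hmin⟩
    refine ⟨weighing_iff_nice.mpr hni, ?_⟩
    intro m' w' hw'
    have h2 := nice_sum_le (weighing_iff_nice.mp hw')
    by_contra hcon
    have : (3:ℕ) ^ m' ≤ 3 ^ (m - 1) := Nat.pow_le_pow_right (by norm_num) (by omega)
    omega

/-- nice partitions with all parts bounded by `a` -/
def NiceTop {p : ℕ} (n a : ℕ) (v : Fin p → ℕ) : Prop := Nice n p v ∧ ∀ i, v i ≤ a

noncomputable def cntT (p n a : ℕ) : ℕ := Nat.card {v : Fin p → ℕ // NiceTop n a v}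

lemma part_le_sum {p n : ℕ} {v : Fin p → ℕ} (h : Nice n p v) (i : Fin p) : v i ≤ n := by
  rw [← h.2.2.1]
  exact Finset.single_le_sum (fun _ _ => Nat.zero_le _) (Finset.mem_univ i)

instance niceTopFinite (p n a : ℕ) : Finite {v : Fin p → ℕ // NiceTop n a v} := by
  apply Finite.of_injective
    (fun v : {v : Fin p → ℕ // NiceTop n a v} =>
      (fun i => (⟨v.1 i, Nat.lt_succ_of_le (part_le_sum v.2.1 i)⟩ : Fin (n + 1))))
  intro v v' hvv
  apply Subtype.ext
  funext i
  have := congrFun hvv i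
  simpa [Fin.mk.injEq] using this

lemma mycard_sigma {ι : Type} [Fintype ι] (F : ι → Type) [∀ i, Finite (F i)] :
    Nat.card (Σ i, F i) = ∑ i, Nat.card (F i) := by
  classical
  haveI := fun i => Fintype.ofFinite (F i)
  simp [Nat.card_eq_fintype_card, Fintype.card_sigma]

/-- The central recursion: strip off the largest part. -/
lemma cntT_succ (p R a : ℕ) (hR : 1 ≤ R) :
    cntT (p + 1) R a =
      ∑ S ∈ Finset.Icc (max ((R + 1) / 3) (R - a)) (R - 1), cntT p S (R - S) := by
  classical
  set lo := max ((R + 1) / 3) (R - a) with hlo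
  set I : Finset ℕ := Finset.Icc lo (R - 1) with hI
  have hf : ∀ (S : ℕ), S ∈ I → ∀ (v : Fin p → ℕ), NiceTop S (R - S) v →
      NiceTop R a (Fin.snoc v (R - S)) := by
    intro S hS v hv
    rw [hI, Finset.mem_Icc] at hS
    obtain ⟨⟨hpos, hmono, hsum, hnice⟩, htop⟩ := hv
    have h3 : (R + 1) / 3 ≤ S := le_trans (le_max_left _ _) hS.1
    have hRa : R - a ≤ S := le_trans (le_max_right _ _) hS.1
    have hS1 : S ≤ R - 1 := hS.2
    constructor
    · rw [nice_snoc_iff, hsum]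
      refine ⟨⟨hpos, hmono, hsum, hnice⟩, by omega, ?_, by omega, by omega⟩
      intro i
      have := htop i
      omega
    · intro i
      rcases Fin.eq_castSucc_or_eq_last i with ⟨i', rfl⟩ | rfl
      · rw [Fin.snoc_castSucc]
        have := htop i'
        omega
      · rw [Fin.snoc_last]
        omega
  have key : Nat.card (Σ S : I, {v : Fin p → ℕ // NiceTop (S : ℕ) (R - (S : ℕ)) v}) =
      Nat.card {w : Fin (p + 1) → ℕ // NiceTop R a w} := by
    apply Nat.card_eq_of_bijective
      (fun q => ⟨Fin.snoc q.2.1 (R - (q.1 : ℕ)), hf q.1 q.1.2 q.2.1 q.2.2⟩)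
    constructor
    · rintro ⟨⟨S, hS⟩, ⟨v, hv⟩⟩ ⟨⟨S', hS'⟩, ⟨v', hv'⟩⟩ heq
      simp only [Subtype.mk.injEq] at heq
      rw [hI, Finset.mem_Icc] at hS hS'
      have hlast := congrArg (fun g => g (Fin.last p)) heq
      simp only [Fin.snoc_last] at hlast
      have hSeq : S = S' := by omega
      subst hSeq
      have hinit := congrArg Fin.init heq
      rw [Fin.init_snoc, Fin.init_snoc] at hinit
      simp [hinit]
    · rintro ⟨w, hw⟩
      obtain ⟨hni, htop⟩ := hw
      have hni' := hni
      rw [← Fin.snoc_init_self w, nice_snoc_iff] at hni'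
      obtain ⟨hv, hxpos, hvx, hxle, hsum⟩ := hni'
      set x := w (Fin.last p) with hx
      have hxR : x ≤ R := part_le_sum hni (Fin.last p)
      have hxa : x ≤ a := htop (Fin.last p)
      have hvsum : ∑ i, Fin.init w i = R - x := by omega
      have hmem : R - x ∈ I := by
        rw [hI, Finset.mem_Icc]
        refine ⟨max_le (by omega) (by omega), by omega⟩
      have hvnice : NiceTop (R - x) (R - (R - x)) (Fin.init w) := by
        have hrrx : R - (R - x) = x := by omega
        rw [hrrx]
        refine ⟨?_, hvx⟩
        rw [← hvsum]
        exact hv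
      refine ⟨⟨⟨R - x, hmem⟩, ⟨Fin.init w, hvnice⟩⟩, ?_⟩
      apply Subtype.ext
      simp only
      have : R - (R - x) = x := by omega
      rw [this]
      exact Fin.snoc_init_self w
  rw [cntT, ← key, mycard_sigma]
  rw [← Finset.sum_attach I (fun S => cntT p S (R - S))]
  rfl

lemma cntT_eq_full {p n a : ℕ} (h : 2 * n + 1 ≤ 3 * a ∨ n ≤ a) : cntT p n a = cntT p n n := by
  apply Nat.card_congr
  apply Equiv.subtypeEquivRight
  intro v
  constructor
  · rintro ⟨hni, -⟩
    exact ⟨hni, fun i => part_le_sum hni i⟩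
  · rintro ⟨hni, -⟩
    refine ⟨hni, fun i => ?_⟩
    rcases h with h | h
    · have := nice_part_le hni i
      omega
    · have := part_le_sum hni i
      omega

lemma cntT_succ_vanish {p R b : ℕ} (h : 3 ^ p - 1 + 2 * b < 2 * R) : cntT (p + 1) R b = 0 := by
  rw [cntT, Nat.card_eq_zero]
  left
  constructor
  rintro ⟨v, hni, htop⟩
  rw [← Fin.snoc_init_self v, nice_snoc_iff] at hni
  obtain ⟨hv, hxpos, hvx, hxle, hsum⟩ := hni
  have hgrow := nice_sum_le hv
  have hb := htop (Fin.last p)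
  have hp := pow3_pos p
  omega

lemma t_eq_cntT {n q : ℕ} (hn : 1 ≤ n) (hq1 : 3 ^ (q - 1) < 2 * n + 1)
    (hq2 : 2 * n + 1 ≤ 3 ^ q) : t n = cntT q n n := by
  rw [t, cntT]
  apply (Nat.card_eq_of_bijective
    (fun v : {v : Fin q → ℕ // NiceTop n n v} =>
      (⟨⟨q, v.1⟩, (feasible_iff hn).mpr ⟨v.2.1, hq1⟩⟩ :
        {p : (m : ℕ) × (Fin m → ℕ) // IsFeasible n p.1 p.2})) ?_).symm
  constructor
  · rintro ⟨v, hv⟩ ⟨v', hv'⟩ heq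
    apply Subtype.ext
    have h2 : (⟨q, v⟩ : (m : ℕ) × (Fin m → ℕ)) = ⟨q, v'⟩ := congrArg Subtype.val heq
    exact eq_of_heq (Sigma.ext_iff.mp h2).2
  · rintro ⟨⟨m', w'⟩, hfeas⟩
    obtain ⟨hni, hmin⟩ := (feasible_iff hn).mp hfeas
    have hsum := nice_sum_le hni
    have hmq : m' = q := nice_len_eq hsum hmin hq2 hq1
    subst hmq
    exact ⟨⟨w', ⟨hni, fun i => part_le_sum hni i⟩⟩, rfl⟩

end TRec

open TRec Finset

/-- First-span recursion: for `m ≥ 3` and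
`(3^(m-1) + 1)/2 ≤ n ≤ (3^(m-1) + 1)/2 + 3^(m-2)` (stated doubled),
`t n = Σ_{R=⌈(n-1)/3⌉}^{⌊(2n+3^(m-2)-1)/4⌋} t R
     - Σ_{R=⌈(3n+2)/5⌉}^{⌊(2n+3^(m-2)-1)/4⌋} Σ_{S=⌈(R-1)/3⌉}^{2R-n-1} t S`.
The ceilings/floors are expressed by exact natural-number division:
`⌈(n-1)/3⌉ = (n+1)/3`, `⌈(3n+2)/5⌉ = (3n+6)/5`, `⌈(R-1)/3⌉ = (R+1)/3`
(for `n, R ≥ 1`); the identity is cast to `ℤ` so the subtraction is genuine,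
and empty sums are `0`. -/
theorem t_recursion_lower_span (m n : ℕ) (hm : 3 ≤ m)
    (h1 : 3 ^ (m - 1) + 1 ≤ 2 * n) (h2 : 2 * n ≤ 3 ^ (m - 1) + 1 + 2 * 3 ^ (m - 2)) :
    (t n : ℤ) =
      (∑ R ∈ Finset.Icc ((n + 1) / 3) ((2 * n + 3 ^ (m - 2) - 1) / 4), (t R : ℤ)) -
        ∑ R ∈ Finset.Icc ((3 * n + 6) / 5) ((2 * n + 3 ^ (m - 2) - 1) / 4),
          ∑ S ∈ Finset.Icc ((R + 1) / 3) (2 * R - n - 1), (t S : ℤ) := by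
  obtain ⟨p, rfl⟩ : ∃ p, m = p + 2 := ⟨m - 2, by omega⟩
  simp only [show p + 2 - 1 = p + 1 from rfl, show p + 2 - 2 = p from rfl] at h1 h2 ⊢
  have hp1 : 1 ≤ p := by omega
  have h3K : (3:ℕ) ^ (p + 1) = 3 * 3 ^ p := by rw [pow_succ]; ring
  have h9K : (3:ℕ) ^ (p + 2) = 9 * 3 ^ p := by rw [pow_succ, pow_succ]; ring
  have hK3 : 3 * 3 ^ (p - 1) = 3 ^ p := by
    rw [← pow_succ']
    congr 1
    omega
  have hKodd : 3 ^ p % 2 = 1 := odd_pow3 p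
  have hKodd1 : 3 ^ (p - 1) % 2 = 1 := odd_pow3 (p - 1)
  have hKpos : 3 ≤ 3 ^ p := by
    calc (3:ℕ) = 3 ^ 1 := rfl
    _ ≤ 3 ^ p := Nat.pow_le_pow_right (by norm_num) (by omega)
  rw [h3K] at h1 h2
  have hn5 : 5 ≤ n := by omega
  -- step 1 : t n = cntT (p+2) n n
  have step1 : t n = cntT (p + 2) n n :=
    t_eq_cntT (by omega) (show 3 ^ (p + 1) < 2 * n + 1 by rw [h3K]; omega)
      (show 2 * n + 1 ≤ 3 ^ (p + 2) by rw [h9K]; omega)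
  -- step 2 : expand the largest part
  have step2 : cntT (p + 2) n n =
      ∑ R ∈ Finset.Icc ((n + 1) / 3) (n - 1), cntT (p + 1) R (n - R) := by
    have := cntT_succ (p + 1) n n (by omega)
    rwa [show max ((n + 1) / 3) (n - n) = (n + 1) / 3 by simp [Nat.sub_self]] at this
  -- step 3 : restrict the range to [(n+1)/3, U]
  have step3 : ∑ R ∈ Finset.Icc ((n + 1) / 3) ((2 * n + 3 ^ p - 1) / 4), cntT (p + 1) R (n - R) =
      ∑ R ∈ Finset.Icc ((n + 1) / 3) (n - 1), cntT (p + 1) R (n - R) := by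
    apply Finset.sum_subset
    · apply Finset.Icc_subset_Icc_right
      omega
    · intro R hR hnR
      rw [Finset.mem_Icc] at hR
      rw [Finset.mem_Icc] at hnR
      apply cntT_succ_vanish
      omega
  -- the per-R identity
  have hmain : ∀ R ∈ Finset.Icc ((n + 1) / 3) ((2 * n + 3 ^ p - 1) / 4),
      cntT (p + 1) R (n - R) + ∑ S ∈ Finset.Icc ((R + 1) / 3) (2 * R - n - 1), t S = t R := by
    intro R hR
    rw [Finset.mem_Icc] at hR
    have hR2 : 2 ≤ R := by omega
    have h4R : 4 * R ≤ 2 * n + 3 ^ p - 1 := by omega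
    have ha := cntT_succ p R R (by omega)
    have hb := cntT_succ p R (n - R) (by omega)
    rw [show max ((R + 1) / 3) (R - R) = (R + 1) / 3 by simp [Nat.sub_self]] at ha
    have hsplitset : Finset.Icc ((R + 1) / 3) (R - 1) =
        Finset.Icc (max ((R + 1) / 3) (R - (n - R))) (R - 1) ∪
          Finset.Icc ((R + 1) / 3) (2 * R - n - 1) := by
      ext x
      simp only [Finset.mem_Icc, Finset.mem_union, max_le_iff]
      omega
    have hdisj : Disjoint (Finset.Icc (max ((R + 1) / 3) (R - (n - R))) (R - 1))
        (Finset.Icc ((R + 1) / 3) (2 * R - n - 1)) := by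
      rw [Finset.disjoint_left]
      intro x hx hx'
      rw [Finset.mem_Icc] at hx hx'
      rw [max_le_iff] at hx
      omega
    have hconv : ∀ S ∈ Finset.Icc ((R + 1) / 3) (2 * R - n - 1), cntT p S (R - S) = t S := by
      intro S hS
      rw [Finset.mem_Icc] at hS
      have h5 : 2 * S + 1 ≤ 3 * (R - S) := by omega
      rw [cntT_eq_full (Or.inl h5)]
      exact (t_eq_cntT (by omega) (show 3 ^ (p - 1) < 2 * S + 1 by omega)
        (show 2 * S + 1 ≤ 3 ^ p by omega)).symm
    calc cntT (p + 1) R (n - R) + ∑ S ∈ Finset.Icc ((R + 1) / 3) (2 * R - n - 1), t S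
        = cntT (p + 1) R (n - R) +
            ∑ S ∈ Finset.Icc ((R + 1) / 3) (2 * R - n - 1), cntT p S (R - S) := by
          rw [Finset.sum_congr rfl hconv]
      _ = cntT (p + 1) R R := by
          rw [ha, hb, hsplitset, Finset.sum_union hdisj]
      _ = t R := (t_eq_cntT (by omega) (show 3 ^ p < 2 * R + 1 by omega)
          (show 2 * R + 1 ≤ 3 ^ (p + 1) by rw [h3K]; omega)).symm
  -- natural-number version of the identity
  have hNat : t n + ∑ R ∈ Finset.Icc ((n + 1) / 3) ((2 * n + 3 ^ p - 1) / 4),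
      (∑ S ∈ Finset.Icc ((R + 1) / 3) (2 * R - n - 1), t S) =
      ∑ R ∈ Finset.Icc ((n + 1) / 3) ((2 * n + 3 ^ p - 1) / 4), t R := by
    rw [step1, step2, ← step3, ← Finset.sum_add_distrib]
    exact Finset.sum_congr rfl hmain
  -- shrink the subtracted sum's range
  have hshrink : ∑ R ∈ Finset.Icc ((3 * n + 6) / 5) ((2 * n + 3 ^ p - 1) / 4),
      (∑ S ∈ Finset.Icc ((R + 1) / 3) (2 * R - n - 1), t S) =
      ∑ R ∈ Finset.Icc ((n + 1) / 3) ((2 * n + 3 ^ p - 1) / 4),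
      (∑ S ∈ Finset.Icc ((R + 1) / 3) (2 * R - n - 1), t S) := by
    apply Finset.sum_subset
    · apply Finset.Icc_subset_Icc_left
      omega
    · intro R hR hnR
      rw [Finset.mem_Icc] at hR
      rw [Finset.mem_Icc] at hnR
      rw [Finset.Icc_eq_empty (by omega), Finset.sum_empty]
  have hcast := congrArg (fun x : ℕ => (x : ℤ)) hNat
  have hcast2 := congrArg (fun x : ℕ => (x : ℤ)) hshrink
  push_cast at hcast hcast2
  push_cast
  linarith
end

section
/- Let m ≥ 2 and let n be an integer with (3^{m−1} + 1)/2 + 3^{m−2} + 1 ≤ n ≤ (3^m − 1)/2. Then the number of feasible partitions of n satisfies the recursion t(n) = Σ_{R = ⌈(n−1)/3⌉}^{(3^{m−1} − 1)/2} t(R). -/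
namespace FPAux

/-- prefix sum: sum of `w i` for `i < j`. -/
def pS {m : ℕ} (w : Fin m → ℕ) (j : ℕ) : ℕ :=
  ∑ i ∈ Finset.univ.filter (fun i : Fin m => (i : ℕ) < j), w i

/-- The prefix condition. -/
def Cond {m : ℕ} (w : Fin m → ℕ) : Prop := ∀ j : Fin m, w j ≤ 2 * pS w (j : ℕ) + 1

lemma pS_zero {m : ℕ} (w : Fin m → ℕ) : pS w 0 = 0 := by simp [pS]

lemma pS_succ {m : ℕ} (w : Fin m → ℕ) {j : ℕ} (hj : j < m) :
    pS w (j + 1) = pS w j + w ⟨j, hj⟩ := by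
  classical
  have h : Finset.univ.filter (fun i : Fin m => (i : ℕ) < j + 1)
      = insert (⟨j, hj⟩ : Fin m) (Finset.univ.filter (fun i : Fin m => (i : ℕ) < j)) := by
    ext i
    simp only [Finset.mem_filter, Finset.mem_univ, true_and, Finset.mem_insert, Fin.ext_iff]
    omega
  rw [pS, h, Finset.sum_insert (by simp)]
  simp [pS, Nat.add_comm]

lemma pS_le_sum {m : ℕ} (w : Fin m → ℕ) (j : ℕ) : pS w j ≤ ∑ i, w i :=
  Finset.sum_le_sum_of_subset (Finset.filter_subset _ _)

lemma pS_eq_sum {m : ℕ} (w : Fin m → ℕ) {j : ℕ} (h : m ≤ j) : pS w j = ∑ i, w i := by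
  rw [pS, Finset.filter_true_of_mem]
  intro i _
  exact lt_of_lt_of_le i.2 h

lemma pS_init {m : ℕ} (w : Fin (m + 1) → ℕ) {j : ℕ} (hj : j ≤ m) :
    pS (Fin.init w) j = pS w j := by
  induction j with
  | zero => simp [pS_zero]
  | succ j ih =>
    rw [pS_succ (Fin.init w) (show j < m by omega), pS_succ w (show j < m + 1 by omega),
      ih (by omega)]
    congr 1

lemma pS_snoc {m : ℕ} (w : Fin m → ℕ) (x : ℕ) {j : ℕ} (hj : j ≤ m) :
    pS (Fin.snoc w x) j = pS w j := by
  have h := pS_init (Fin.snoc w x) hj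
  rw [Fin.init_snoc] at h
  exact h.symm

lemma sum_snoc {m : ℕ} (w : Fin m → ℕ) (x : ℕ) :
    (∑ i, Fin.snoc w x i) = (∑ i, w i) + x := by
  rw [Fin.sum_univ_castSucc]
  simp

lemma cond_init {m : ℕ} {w : Fin (m + 1) → ℕ} (hc : Cond w) : Cond (Fin.init w) := by
  intro j
  have h := hc j.castSucc
  have h2 : pS (Fin.init w) (j : ℕ) = pS w (j : ℕ) := pS_init w (le_of_lt j.isLt)
  simpa [Fin.init, h2] using h

theorem exists_rep_of_cond : ∀ {m : ℕ} (w : Fin m → ℕ), Cond w → ∀ k : ℤ,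
    |k| ≤ ((∑ i, w i : ℕ) : ℤ) →
    ∃ u : Fin m → ℤ, (∀ i, u i = -1 ∨ u i = 0 ∨ u i = 1) ∧ k = ∑ i, u i * (w i : ℤ) := by
  intro m
  induction m with
  | zero =>
    intro w _ k hk
    refine ⟨fun _ => 0, fun i => i.elim0, ?_⟩
    simp only [Finset.univ_eq_empty, Finset.sum_empty] at hk ⊢
    rw [abs_le] at hk
    push_cast at hk
    omega
  | succ m ih =>
    intro w hc k hk
    have hc' : Cond (Fin.init w) := cond_init hc
    set S' := ∑ i, Fin.init w i with hS'
    have hSmS : pS w m = S' := by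
      rw [← pS_init w le_rfl, pS_eq_sum _ le_rfl]
    have htot : (∑ i, w i) = S' + w (Fin.last m) := by
      rw [Fin.sum_univ_castSucc]
      rfl
    have hW : w (Fin.last m) ≤ 2 * S' + 1 := by
      have h := hc (Fin.last m)
      rwa [show ((Fin.last m : Fin (m + 1)) : ℕ) = m from rfl, hSmS] at h
    have hWz : (w (Fin.last m) : ℤ) ≤ 2 * (S' : ℤ) + 1 := by exact_mod_cast hW
    have hWz0 : (0 : ℤ) ≤ (w (Fin.last m) : ℤ) := Int.natCast_nonneg _
    rw [htot] at hk
    rw [abs_le] at hk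
    push_cast at hk
    obtain ⟨c, hcmem, hck⟩ : ∃ c : ℤ, (c = -1 ∨ c = 0 ∨ c = 1) ∧
        |k - c * (w (Fin.last m) : ℤ)| ≤ (S' : ℤ) := by
      by_cases h1 : (S' : ℤ) < k
      · exact ⟨1, Or.inr (Or.inr rfl), by rw [abs_le]; constructor <;> omega⟩
      · by_cases h2 : k < -(S' : ℤ)
        · exact ⟨-1, Or.inl rfl, by rw [abs_le]; constructor <;> omega⟩
        · exact ⟨0, Or.inr (Or.inl rfl), by rw [abs_le]; constructor <;> omega⟩
    obtain ⟨u', hu'mem, hu'⟩ := ih (Fin.init w) hc' (k - c * (w (Fin.last m) : ℤ)) hck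
    refine ⟨Fin.snoc u' c, ?_, ?_⟩
    · intro i
      induction i using Fin.lastCases with
      | last => simpa using hcmem
      | cast j => simpa using hu'mem j
    · rw [Fin.sum_univ_castSucc]
      simp only [Fin.snoc_castSucc, Fin.snoc_last]
      have : (∑ i : Fin m, u' i * (w i.castSucc : ℤ)) = k - c * (w (Fin.last m) : ℤ) := by
        rw [hu']
        rfl
      rw [this]
      ring

theorem cond_of_weighing {n m : ℕ} {w : Fin m → ℕ} (hw : IsWeighingSeq n m w) : Cond w := by
  classical
  obtain ⟨hpos, hmono, hsum, hrep⟩ := hw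
  intro j
  by_contra hbad
  push_neg at hbad
  set S := pS w (j : ℕ) with hS
  set V := ∑ i ∈ Finset.univ.filter (fun i : Fin m => ¬ ((i : ℕ) < (j : ℕ))), w i with hV
  have hsplit : S + V = n := by
    rw [hS, hV, pS, Finset.sum_filter_add_sum_filter_not, hsum]
  have hjV : w j ≤ V :=
    Finset.single_le_sum (f := w) (fun i _ => Nat.zero_le _) (by simp)
  obtain ⟨u, humem, hu⟩ := hrep ((n : ℤ) - 2 * S - 1) (by omega) (by omega)
  rw [← Finset.sum_filter_add_sum_filter_not Finset.univ
      (fun i : Fin m => (i : ℕ) < (j : ℕ)) (fun i => u i * (w i : ℤ))] at hu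
  set A := ∑ i ∈ Finset.univ.filter (fun i : Fin m => (i : ℕ) < (j : ℕ)), u i * (w i : ℤ) with hA
  set T := ∑ i ∈ Finset.univ.filter (fun i : Fin m => ¬ ((i : ℕ) < (j : ℕ))), u i * (w i : ℤ) with hT
  have hbound : ∀ i : Fin m, - (w i : ℤ) ≤ u i * (w i : ℤ) ∧ u i * (w i : ℤ) ≤ (w i : ℤ) := by
    intro i
    rcases humem i with h | h | h <;> simp [h]
  have hA1 : A ≤ (S : ℤ) := by
    have : A ≤ ∑ i ∈ Finset.univ.filter (fun i : Fin m => (i : ℕ) < (j : ℕ)), (w i : ℤ) :=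
      Finset.sum_le_sum (fun i _ => (hbound i).2)
    have hcast : (∑ i ∈ Finset.univ.filter (fun i : Fin m => (i : ℕ) < (j : ℕ)), (w i : ℤ))
        = (S : ℤ) := by
      rw [hS, pS]; push_cast; rfl
    omega
  have hA2 : -(S : ℤ) ≤ A := by
    have : (∑ i ∈ Finset.univ.filter (fun i : Fin m => (i : ℕ) < (j : ℕ)), -(w i : ℤ)) ≤ A :=
      Finset.sum_le_sum (fun i _ => (hbound i).1)
    have hcast : (∑ i ∈ Finset.univ.filter (fun i : Fin m => (i : ℕ) < (j : ℕ)), -(w i : ℤ))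
        = -(S : ℤ) := by
      rw [hS, pS]; push_cast [Finset.sum_neg_distrib]; rfl
    omega
  have hTval : T = (n : ℤ) - 2 * S - 1 - A := by omega
  have hex : ∃ i0 ∈ Finset.univ.filter (fun i : Fin m => ¬ ((i : ℕ) < (j : ℕ))), u i0 ≠ 1 := by
    by_contra hall
    have hall' : ∀ i ∈ Finset.univ.filter (fun i : Fin m => ¬ ((i : ℕ) < (j : ℕ))),
        u i = 1 := by
      intro i hi
      by_contra hne
      exact hall ⟨i, hi, hne⟩
    have hTV : T = (V : ℤ) := by
      rw [hT, hV]
      push_cast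
      exact Finset.sum_congr rfl (fun i hi => by rw [hall' i hi, one_mul])
    omega
  obtain ⟨i0, hi0mem, hi0⟩ := hex
  have hile : (j : Fin m) ≤ i0 := by
    simp only [Finset.mem_filter, Finset.mem_univ, true_and] at hi0mem
    exact Fin.le_def.mpr (by omega)
  have hwj : w j ≤ w i0 := hmono hile
  have hu0 : u i0 * (w i0 : ℤ) ≤ 0 := by
    rcases humem i0 with h | h | h
    · simp [h]
    · simp [h]
    · exact absurd h hi0
  have hTsplit : T = u i0 * (w i0 : ℤ)
      + ∑ i ∈ (Finset.univ.filter (fun i : Fin m => ¬ ((i : ℕ) < (j : ℕ)))).erase i0,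
          u i * (w i : ℤ) := (Finset.add_sum_erase _ _ hi0mem).symm
  have hrest : (∑ i ∈ (Finset.univ.filter (fun i : Fin m => ¬ ((i : ℕ) < (j : ℕ)))).erase i0,
      u i * (w i : ℤ))
      ≤ ∑ i ∈ (Finset.univ.filter (fun i : Fin m => ¬ ((i : ℕ) < (j : ℕ)))).erase i0, (w i : ℤ) :=
    Finset.sum_le_sum (fun i _ => (hbound i).2)
  have hVsplit : (V : ℤ) = (w i0 : ℤ)
      + ∑ i ∈ (Finset.univ.filter (fun i : Fin m => ¬ ((i : ℕ) < (j : ℕ)))).erase i0, (w i : ℤ) := by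
    rw [hV]
    push_cast
    exact (Finset.add_sum_erase _ (fun i => (w i : ℤ)) hi0mem).symm
  omega

theorem weighing_iff {n m : ℕ} {w : Fin m → ℕ} :
    IsWeighingSeq n m w ↔ (∀ i, 0 < w i) ∧ Monotone w ∧ (∑ i, w i) = n ∧ Cond w := by
  constructor
  · intro hw
    exact ⟨hw.1, hw.2.1, hw.2.2.1, cond_of_weighing hw⟩
  · rintro ⟨hpos, hmono, hsum, hcond⟩
    refine ⟨hpos, hmono, hsum, fun k hk1 hk2 => ?_⟩
    apply exists_rep_of_cond w hcond
    rw [hsum, abs_le]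
    omega

theorem cond_sum_bound {m : ℕ} {w : Fin m → ℕ} (hc : Cond w) :
    2 * (∑ i, w i) + 1 ≤ 3 ^ m := by
  have key : ∀ j, j ≤ m → 2 * pS w j + 1 ≤ 3 ^ j := by
    intro j
    induction j with
    | zero => intro; simp [pS_zero]
    | succ j ih =>
      intro hj
      have h1 := ih (by omega)
      rw [pS_succ w (show j < m by omega)]
      have h2 : w ⟨j, show j < m by omega⟩ ≤ 2 * pS w j + 1 := by
        have := hc ⟨j, show j < m by omega⟩
        simpa [Fin.val_mk] using this
      have h3 : (3:ℕ) ^ (j+1) = 3 * 3 ^ j := by ring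
      omega
  have := key m le_rfl
  rwa [pS_eq_sum w le_rfl] at this

lemma lt_len {n m' μ : ℕ} {w'' : Fin m' → ℕ} (hw : IsWeighingSeq n m' w'')
    (h : 3 ^ μ < 2 * n + 1) : μ < m' := by
  have h2 := cond_sum_bound (cond_of_weighing hw)
  rw [hw.2.2.1] at h2
  have : (3:ℕ) ^ μ < 3 ^ m' := by omega
  exact (Nat.pow_lt_pow_iff_right (by norm_num)).mp this

lemma monotone_snoc {m : ℕ} {w : Fin m → ℕ} {x : ℕ} (hm : Monotone w)
    (hx : ∀ i, w i ≤ x) : Monotone (Fin.snoc w x) := by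
  intro a b hab
  induction b using Fin.lastCases with
  | last =>
    induction a using Fin.lastCases with
    | last => simp
    | cast aj => simp [hx aj]
  | cast bj =>
    induction a using Fin.lastCases with
    | last =>
      exfalso
      have h1 := Fin.le_def.mp hab
      simp only [Fin.val_last, Fin.coe_castSucc] at h1
      omega
    | cast aj =>
      simp only [Fin.snoc_castSucc]
      exact hm (Fin.castSucc_le_castSucc_iff.mp hab)

lemma cond_snoc {m : ℕ} {w : Fin m → ℕ} {x : ℕ} (hc : Cond w)
    (hx : x ≤ 2 * (∑ i, w i) + 1) : Cond (Fin.snoc w x) := by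
  intro j
  induction j using Fin.lastCases with
  | last =>
    rw [Fin.snoc_last, show ((Fin.last m : Fin (m + 1)) : ℕ) = m from rfl,
      pS_snoc w x le_rfl, pS_eq_sum w le_rfl]
    exact hx
  | cast j =>
    rw [Fin.snoc_castSucc, show ((j.castSucc : Fin (m+1)) : ℕ) = (j : ℕ) from rfl,
      pS_snoc w x (le_of_lt j.isLt)]
    exact hc j

lemma ws_one : IsWeighingSeq 1 1 (fun _ => 1) := by
  refine ⟨fun _ => one_pos, monotone_const, by simp, fun k hk1 hk2 => ?_⟩
  have hk : k = 1 := le_antisymm (by simpa using hk2) hk1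
  exact ⟨fun _ => 1, fun i => Or.inr (Or.inr rfl), by simp [hk]⟩

lemma pS_pow {ν : ℕ} : ∀ j : ℕ, j ≤ ν → 2 * pS (fun i : Fin ν => 3 ^ (i : ℕ)) j + 1 = 3 ^ j := by
  intro j
  induction j with
  | zero => intro; simp [pS_zero]
  | succ j ih =>
    intro hj
    have h1 := ih (by omega)
    rw [pS_succ _ (show j < ν by omega)]
    have h3 : (3:ℕ) ^ (j+1) = 3 * 3 ^ j := by ring
    have h4 : ((⟨j, show j < ν by omega⟩ : Fin ν) : ℕ) = j := rfl
    rw [h4]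
    omega

lemma two_mul_powsum (ν : ℕ) : 2 * (∑ i : Fin ν, 3 ^ (i : ℕ)) + 1 = 3 ^ ν := by
  have := pS_pow (ν := ν) ν le_rfl
  rwa [pS_eq_sum _ le_rfl] at this

lemma ws_exists {μ n : ℕ} (hlo : 3 ^ (μ + 1) + 2 * 3 ^ μ + 1 ≤ 2 * n)
    (hhi : 2 * n + 1 ≤ 3 ^ (μ + 2)) :
    ∃ w : Fin (μ + 2) → ℕ, IsWeighingSeq n (μ + 2) w := by
  set C := ∑ i : Fin (μ + 1), 3 ^ (i : ℕ) with hC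
  have h2C : 2 * C + 1 = 3 ^ (μ + 1) := two_mul_powsum (μ + 1)
  have hP : 1 ≤ 3 ^ μ := Nat.one_le_pow _ _ (by norm_num)
  have e1 : (3:ℕ) ^ (μ + 1) = 3 * 3 ^ μ := by ring
  have e2 : (3:ℕ) ^ (μ + 2) = 9 * 3 ^ μ := by ring
  have hCn : C < n := by omega
  have hlast : 3 ^ μ ≤ n - C := by omega
  refine ⟨Fin.snoc (fun i : Fin (μ + 1) => 3 ^ (i : ℕ)) (n - C), weighing_iff.mpr
    ⟨?_, ?_, ?_, ?_⟩⟩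
  · intro i
    induction i using Fin.lastCases with
    | last => simp only [Fin.snoc_last]; omega
    | cast j => simp only [Fin.snoc_castSucc]; positivity
  · refine monotone_snoc ?_ ?_
    · intro i j hij
      exact Nat.pow_le_pow_right (by norm_num) (Fin.le_def.mp hij)
    · intro i
      calc 3 ^ (i : ℕ) ≤ 3 ^ μ := Nat.pow_le_pow_right (by norm_num) (by omega)
        _ ≤ n - C := hlast
  · rw [sum_snoc]
    omega
  · refine cond_snoc ?_ ?_
    · intro j
      have h := pS_pow (ν := μ + 1) (j : ℕ) (le_of_lt j.isLt)
      show 3 ^ (j : ℕ) ≤ _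
      omega
    · rw [← hC]
      omega



/-- feasible partitions of `N` with a fixed length. -/
def Fw (N μ : ℕ) : Type := {w : Fin μ → ℕ // IsFeasible N μ w}

instance (N μ : ℕ) : Finite (Fw N μ) := by
  apply Finite.of_injective (fun p : Fw N μ => fun i : Fin μ =>
    (⟨p.1 i, by
      have hsum := p.2.1.2.2.1
      have hle : p.1 i ≤ ∑ k, p.1 k :=
        Finset.single_le_sum (fun k _ => Nat.zero_le _) (Finset.mem_univ i)
      omega⟩ : Fin (N + 1)))
  intro p q h
  apply Subtype.ext
  funext i
  have := congrFun h i
  exact congrArg Fin.val this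

lemma card_fixed (N μ : ℕ) (h : ∀ m' (w' : Fin m' → ℕ), IsFeasible N m' w' → m' = μ) :
    t N = Nat.card (Fw N μ) := by
  apply Nat.card_congr
  apply Equiv.symm
  apply Equiv.ofBijective (fun q : Fw N μ => (⟨⟨μ, q.1⟩, q.2⟩ :
    {p : (m : ℕ) × (Fin m → ℕ) // IsFeasible N p.1 p.2}))
  constructor
  · intro q1 q2 hq
    apply Subtype.ext
    have h' := congrArg Subtype.val hq
    simp only at h'
    exact eq_of_heq (Sigma.mk.inj_iff.mp h').2
  · rintro ⟨⟨m', w'⟩, hp⟩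
    have hm := h m' w' hp
    subst hm
    exact ⟨⟨w', hp⟩, rfl⟩

lemma monotone_init {m : ℕ} {w : Fin (m + 1) → ℕ} (hm : Monotone w) :
    Monotone (Fin.init w) := by
  intro i j hij
  exact hm (Fin.castSucc_le_castSucc_iff.mpr hij)

lemma step_up {m₀ n R : ℕ} (hn1 : 3 ^ (m₀ + 1) + 2 * 3 ^ m₀ + 3 ≤ 2 * n)
    (hR1 : n ≤ 3 * R + 1) (hR2 : 2 * R + 1 ≤ 3 ^ (m₀ + 1)) {w' : Fin (m₀ + 1) → ℕ}
    (hw' : IsFeasible R (m₀ + 1) w') :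
    IsFeasible n (m₀ + 2) (Fin.snoc w' (n - R)) := by
  obtain ⟨hw, _hmin⟩ := hw'
  obtain ⟨hpos, hmono, hsum, hcond⟩ := weighing_iff.mp hw
  have hP : 1 ≤ 3 ^ m₀ := Nat.one_le_pow _ _ (by norm_num)
  have e1 : (3:ℕ) ^ (m₀ + 1) = 3 * 3 ^ m₀ := by ring
  have hRn : R < n := by omega
  have hW3 : 2 * R + 1 ≤ 3 * (n - R) := by omega
  have hile : ∀ i, w' i ≤ n - R := by
    intro i
    have hci := hcond i
    have h2 : pS w' (i : ℕ) + w' i ≤ R := by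
      have hs := pS_succ w' i.isLt
      have he : (⟨(i : ℕ), i.isLt⟩ : Fin (m₀ + 1)) = i := Fin.eta i i.isLt
      rw [he] at hs
      have := pS_le_sum w' ((i : ℕ) + 1)
      omega
    omega
  refine ⟨weighing_iff.mpr ⟨?_, monotone_snoc hmono hile, ?_, cond_snoc hcond (by omega)⟩, ?_⟩
  · intro i
    induction i using Fin.lastCases with
    | last => simp only [Fin.snoc_last]; omega
    | cast j => simp only [Fin.snoc_castSucc]; exact hpos j
  · rw [sum_snoc, hsum]
    omega
  · intro m' w'' hw''
    have := lt_len hw'' (show 3 ^ (m₀ + 1) < 2 * n + 1 by omega)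
    omega

theorem t_recursion_upper_span' (m₀ n : ℕ)
    (h1 : 3 ^ (m₀ + 1) + 2 * 3 ^ m₀ + 3 ≤ 2 * n) (h2 : 2 * n ≤ 3 ^ (m₀ + 2) - 1) :
    t n = ∑ R ∈ Finset.Icc ((n + 1) / 3) ((3 ^ (m₀ + 1) - 1) / 2), t R := by
  classical
  have hP : 1 ≤ 3 ^ m₀ := Nat.one_le_pow _ _ (by norm_num)
  have e1 : (3:ℕ) ^ (m₀ + 1) = 3 * 3 ^ m₀ := by ring
  have e2 : (3:ℕ) ^ (m₀ + 2) = 9 * 3 ^ m₀ := by ring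
  have hodd : 3 ^ (m₀ + 1) % 2 = 1 := Nat.odd_iff.mp (Odd.pow (by decide : Odd 3))
  set a := (n + 1) / 3 with ha
  set b := (3 ^ (m₀ + 1) - 1) / 2 with hb
  have hb2 : 2 * b + 1 = 3 ^ (m₀ + 1) := by omega
  -- length of feasible partitions of n is m₀ + 2
  have hlen_n : ∀ m' (w' : Fin m' → ℕ), IsFeasible n m' w' → m' = m₀ + 2 := by
    intro m' w' ⟨hw', hmin⟩
    have hge := lt_len hw' (show 3 ^ (m₀ + 1) < 2 * n + 1 by omega)
    obtain ⟨wit, hwit⟩ := ws_exists (μ := m₀) (n := n) (by omega) (by omega)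
    have := hmin _ _ hwit
    omega
  -- length of feasible partitions of R ∈ [a,b] is m₀ + 1
  have hlen_R : ∀ R, R ∈ Finset.Icc a b → ∀ m' (w' : Fin m' → ℕ),
      IsFeasible R m' w' → m' = m₀ + 1 := by
    intro R hR m' w' ⟨hw', hmin⟩
    rw [Finset.mem_Icc] at hR
    have hn3R : n ≤ 3 * R + 1 := by omega
    have hge := lt_len hw' (show 3 ^ m₀ < 2 * R + 1 by omega)
    have hex : ∃ w'' : Fin (m₀ + 1) → ℕ, IsWeighingSeq R (m₀ + 1) w'' := by
      match m₀, hP, e1, e2, hb2, hge, h1, h2, hR, hn3R with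
      | 0, _, _, _, hb2, _, h1, h2, hR, hn3R =>
        have : R = 1 := by omega
        subst this
        exact ⟨fun _ => 1, ws_one⟩
      | (ν + 1), _, _, _, hb2, _, h1, h2, hR, hn3R =>
        have hQ : 1 ≤ 3 ^ ν := Nat.one_le_pow _ _ (by norm_num)
        have f1 : (3:ℕ) ^ (ν + 1) = 3 * 3 ^ ν := by ring
        have f2 : (3:ℕ) ^ (ν + 2) = 9 * 3 ^ ν := by ring
        have f3 : (3:ℕ) ^ (ν + 3) = 27 * 3 ^ ν := by ring
        exact ws_exists (μ := ν) (n := R) (by omega) (by omega)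
    obtain ⟨wit, hwit⟩ := hex
    have := hmin _ _ hwit
    omega
  -- the bijection
  have hbij : Function.Bijective
      (fun q : (R : {x // x ∈ Finset.Icc a b}) × Fw R.1 (m₀ + 1) =>
        (⟨Fin.snoc q.2.1 (n - q.1.1), by
          have hR := Finset.mem_Icc.mp q.1.2
          exact step_up h1 (by omega) (by omega) q.2.2⟩ : Fw n (m₀ + 2))) := by
    constructor
    · rintro ⟨R1, w1⟩ ⟨R2, w2⟩ hq
      have h' := congrArg Subtype.val hq
      simp only at h'
      have hinit : w1.1 = w2.1 := by
        have := congrArg Fin.init h'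
        rwa [Fin.init_snoc, Fin.init_snoc] at this
      have hRR : R1.1 = R2.1 := by
        have hs1 := w1.2.1.2.2.1
        have hs2 := w2.2.1.2.2.1
        rw [← hs1, ← hs2, hinit]
      have hR12 : R1 = R2 := Subtype.ext hRR
      subst hR12
      have hw12 : w1 = w2 := Subtype.ext hinit
      rw [hw12]
    · rintro ⟨w, hw⟩
      obtain ⟨hw0, hmin⟩ := hw
      obtain ⟨hpos, hmono, hsum, hcond⟩ := weighing_iff.mp hw0
      set w' := Fin.init w with hw'
      set R := ∑ i, w' i with hR
      have hsumsplit : R + w (Fin.last (m₀ + 1)) = n := by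
        rw [← hsum, Fin.sum_univ_castSucc]
        rfl
      have hlastle : w (Fin.last (m₀ + 1)) ≤ 2 * R + 1 := by
        have h := hcond (Fin.last (m₀ + 1))
        rwa [show ((Fin.last (m₀ + 1) : Fin (m₀ + 2)) : ℕ) = m₀ + 1 from rfl,
          ← pS_init w le_rfl, pS_eq_sum _ le_rfl] at h
      have hcond' : Cond w' := cond_init hcond
      have hR2 : 2 * R + 1 ≤ 3 ^ (m₀ + 1) := by
        have := cond_sum_bound hcond'
        omega
      have hn3R : n ≤ 3 * R + 1 := by omega
      have hfeas : IsFeasible R (m₀ + 1) w' := by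
        refine ⟨weighing_iff.mpr ⟨fun i => hpos i.castSucc, monotone_init hmono, rfl, hcond'⟩, ?_⟩
        intro m' w'' hw''
        have := lt_len hw'' (show 3 ^ m₀ < 2 * R + 1 by omega)
        omega
      have hmem : R ∈ Finset.Icc a b := by
        rw [Finset.mem_Icc]
        constructor
        · omega
        · omega
      refine ⟨⟨⟨R, hmem⟩, ⟨w', hfeas⟩⟩, ?_⟩
      apply Subtype.ext
      simp only
      have hnr : n - R = w (Fin.last (m₀ + 1)) := by omega
      rw [hnr, Fin.snoc_init_self]
  -- counting
  haveI : ∀ R : {x // x ∈ Finset.Icc a b}, Fintype (Fw R.1 (m₀ + 1)) :=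
    fun R => Fintype.ofFinite _
  haveI : Fintype (Fw n (m₀ + 2)) := Fintype.ofFinite _
  rw [card_fixed n (m₀ + 2) hlen_n]
  have hc1 : Nat.card (Fw n (m₀ + 2))
      = Nat.card ((R : {x // x ∈ Finset.Icc a b}) × Fw R.1 (m₀ + 1)) :=
    (Nat.card_congr (Equiv.ofBijective _ hbij)).symm
  rw [hc1]
  rw [Nat.card_eq_fintype_card, Fintype.card_sigma]
  have hc2 : ∀ R : {x // x ∈ Finset.Icc a b},
      Fintype.card (Fw R.1 (m₀ + 1)) = t R.1 := by
    intro R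
    rw [← Nat.card_eq_fintype_card, card_fixed R.1 (m₀ + 1) (hlen_R R.1 R.2)]
  rw [Finset.sum_congr rfl (fun R _ => hc2 R)]
  exact Finset.sum_coe_sort (Finset.Icc a b) t

end FPAux

/-- Second-span recursion: for `m ≥ 2` and
`(3^(m-1) + 1)/2 + 3^(m-2) + 1 ≤ n ≤ (3^m - 1)/2` (stated doubled),
`t n = Σ_{R=⌈(n-1)/3⌉}^{(3^(m-1)-1)/2} t R`, where `⌈(n-1)/3⌉ = (n+1)/3`
(exact natural-number division, `n ≥ 1`). -/
theorem t_recursion_upper_span (m n : ℕ) (hm : 2 ≤ m)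
    (h1 : 3 ^ (m - 1) + 2 * 3 ^ (m - 2) + 3 ≤ 2 * n) (h2 : 2 * n ≤ 3 ^ m - 1) :
    t n = ∑ R ∈ Finset.Icc ((n + 1) / 3) ((3 ^ (m - 1) - 1) / 2), t R := by
  obtain ⟨m₀, rfl⟩ : ∃ m₀, m = m₀ + 2 := ⟨m - 2, by omega⟩
  have e1 : m₀ + 2 - 1 = m₀ + 1 := rfl
  have e2 : m₀ + 2 - 2 = m₀ := rfl
  rw [e1, e2] at h1
  rw [e1]
  exact FPAux.t_recursion_upper_span' m₀ n h1 h2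
end
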